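/- For positive reals a, b and ν ∈ [0,1] with r = min{ν, 1−ν} and ω = max{√a, √b}, we have ω · L(√a, √b) · log S(√(a/b)) ≥ (1−ν)a + νb − a^{1−ν} b^ν − r(√a − √b)², where L is the logarithmic mean and S is Specht's ratio. -/

import Mathlib

/-- Specht's ratio `S(h) = h^{1/(h-1)} / (e log h^{1/(h-1)})` for `h ≠ 1`, with `S(1) = 1`. -/
noncomputable def specht (h : ℝ) : ℝ :=
  if h = 1 then 1
  else h ^ ((1:ℝ)/(h-1)) / (Real.exp 1 * Real.log (h ^ ((1:ℝ)/(h-1))))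

/-- The logarithmic mean `L(x,y) = (y-x)/(log y - log x)` for `x ≠ y`, with `L(x,x) = x`. -/
noncomputable def logMean (x y : ℝ) : ℝ :=
  if x = y then x else (y - x) / (Real.log y - Real.log x)

lemma logMean_symm (x y : ℝ) : logMean x y = logMean y x := by
  unfold logMean
  rcases eq_or_ne x y with h | h
  · rw [h]
  · rw [if_neg h, if_neg (Ne.symm h), ← neg_sub x y, ← neg_sub (Real.log x) (Real.log y),
      neg_div_neg_eq]

lemma logMean_pos {x y : ℝ} (hx : 0 < x) (hy : 0 < y) : 0 < logMean x y := by
  unfold logMean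
  split_ifs with h
  · exact hx
  · rcases lt_or_gt_of_ne h with hlt | hgt
    · exact div_pos (by linarith) (by have := Real.log_lt_log hx hlt; linarith)
    · have := Real.log_lt_log hy hgt
      exact div_pos_of_neg_of_neg (by linarith) (by linarith)

lemma logMean_smul (c x y : ℝ) (hc : 0 < c) (hx : 0 < x) (hy : 0 < y) :
    logMean (c*x) (c*y) = c * logMean x y := by
  unfold logMean
  rcases eq_or_ne x y with h | h
  · subst h; simp
  · rw [if_neg h, if_neg (by intro hh; exact h (mul_left_cancel₀ hc.ne' hh)),
      Real.log_mul hc.ne' hx.ne', Real.log_mul hc.ne' hy.ne',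
      show c*y - c*x = c*(y-x) by ring,
      show Real.log c + Real.log y - (Real.log c + Real.log x)
        = Real.log y - Real.log x by ring, mul_div_assoc]

lemma d_pos {h : ℝ} (hh : 0 < h) (hne : h ≠ 1) : 0 < Real.log h / (h - 1) := by
  rcases lt_or_gt_of_ne hne with h1 | h1
  · exact div_pos_of_neg_of_neg (Real.log_neg hh h1) (by linarith)
  · exact div_pos (Real.log_pos h1) (by linarith)

lemma log_specht {h : ℝ} (hh : 0 < h) (hne : h ≠ 1) :
    Real.log (specht h) = Real.log h/(h-1) - 1 - Real.log (Real.log h/(h-1)) := by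
  have hd : 0 < Real.log h / (h-1) := d_pos hh hne
  set d := Real.log h / (h-1) with hdef
  have hc : h ^ ((1:ℝ)/(h-1)) = Real.exp d := by
    rw [Real.rpow_def_of_pos hh]; congr 1; rw [hdef]; ring
  unfold specht
  rw [if_neg hne, hc, Real.log_exp,
    Real.log_div (Real.exp_ne_zero d) (by positivity),
    Real.log_mul (Real.exp_ne_zero 1) hd.ne', Real.log_exp, Real.log_exp]
  ring

lemma log_specht_nonneg {h : ℝ} (hh : 0 < h) : 0 ≤ Real.log (specht h) := by
  rcases eq_or_ne h 1 with h1 | h1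
  · subst h1; unfold specht; simp
  · rw [log_specht hh h1]
    have hd : 0 < Real.log h / (h-1) := d_pos hh h1
    have := Real.log_le_sub_one_of_pos hd
    linarith

lemma log_specht_inv {h : ℝ} (hh : 0 < h) (hne : h ≠ 1) :
    Real.log (specht h⁻¹) = Real.log (specht h) := by
  have hh' : 0 < h⁻¹ := inv_pos.mpr hh
  have hne' : h⁻¹ ≠ 1 := by
    rw [Ne, inv_eq_one]; exact hne
  rw [log_specht hh' hne', log_specht hh hne]
  have hd : 0 < Real.log h / (h-1) := d_pos hh hne
  set d := Real.log h / (h-1) with hdef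
  have h1 : h - 1 ≠ 0 := sub_ne_zero.mpr hne
  have hd' : Real.log h⁻¹ / (h⁻¹ - 1) = h * d := by
    have h2 : h⁻¹ - 1 = -((h-1)/h) := by field_simp; ring
    rw [Real.log_inv, h2, div_neg, neg_div, neg_neg, div_div_eq_mul_div, hdef]
    ring
  rw [hd', Real.log_mul hh.ne' hd.ne']
  have hld : Real.log h = d * (h-1) := by rw [hdef]; field_simp
  linarith

lemma core_lemma (A B : ℝ) (hA : 0 < A) (hB : 0 < B) (μ : ℝ) (h0 : 0 ≤ μ) (h1 : μ ≤ 1) :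
    (1-μ)*A + μ*B - A^(1-μ)*B^μ ≤ logMean A B * Real.log (specht (A/B)) := by
  rcases eq_or_ne A B with hAB | hAB
  · subst hAB
    have hpow : A^(1-μ)*A^μ = A := by
      rw [← Real.rpow_add hA]; norm_num
    rw [hpow, div_self hA.ne', show specht 1 = 1 from if_pos rfl, Real.log_one, mul_zero]
    have : (1-μ)*A + μ*A - A = 0 := by ring
    linarith
  · have hlogne : Real.log A ≠ Real.log B := by
      intro hc
      exact hAB (Real.log_injOn_pos (Set.mem_Ioi.mpr hA) (Set.mem_Ioi.mpr hB) hc)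
    set ℓ := (B - A)/(Real.log B - Real.log A) with hℓdef
    have hℓeq : logMean A B = ℓ := if_neg hAB
    have hlognz : Real.log B - Real.log A ≠ 0 := sub_ne_zero.mpr (Ne.symm hlogne)
    have hℓpos : 0 < ℓ := by
      have := logMean_pos hA hB
      rwa [hℓeq] at this
    have e1 : ℓ * (Real.log B - Real.log A) = B - A := div_mul_cancel₀ _ hlognz
    have hABdiv : 0 < A/B := div_pos hA hB
    have hne1 : A/B ≠ 1 := by rw [Ne, div_eq_one_iff_eq hB.ne']; exact hAB
    set d := Real.log (A/B) / (A/B - 1) with hddef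
    have hdpos : 0 < d := d_pos hABdiv hne1
    have hspec : Real.log (specht (A/B)) = d - 1 - Real.log d := log_specht hABdiv hne1
    have hABne : A - B ≠ 0 := sub_ne_zero.mpr hAB
    have hdl : d * ℓ = B := by
      rw [hddef, hℓdef, Real.log_div hA.ne' hB.ne']
      have hm : A/B - 1 = (A-B)/B := by field_simp
      rw [hm]
      field_simp
      ring
    have hdB : d = B / ℓ := (eq_div_iff hℓpos.ne').mpr hdl
    have e5 : Real.log d = Real.log B - Real.log ℓ := by
      rw [hdB, Real.log_div hB.ne' hℓpos.ne']
    set U := A^(1-μ)*B^μ with hUdef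
    have hUpos : 0 < U := mul_pos (Real.rpow_pos_of_pos hA _) (Real.rpow_pos_of_pos hB _)
    have e2 : Real.log U = (1-μ)*Real.log A + μ*Real.log B := by
      rw [hUdef, Real.log_mul (Real.rpow_pos_of_pos hA _).ne' (Real.rpow_pos_of_pos hB _).ne',
        Real.log_rpow hA, Real.log_rpow hB]
    have e3 : ℓ * (Real.log U - Real.log ℓ) ≤ U - ℓ := by
      have h := Real.log_le_sub_one_of_pos (div_pos hUpos hℓpos)
      rw [Real.log_div hUpos.ne' hℓpos.ne'] at h
      have h2 := mul_le_mul_of_nonneg_left h hℓpos.le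
      have h3 : ℓ * (U/ℓ - 1) = U - ℓ := by field_simp
      linarith
    have e6 : ℓ * (Real.log U - Real.log B) = (1-μ)*(A-B) := by
      calc ℓ * (Real.log U - Real.log B)
          = -(1-μ) * (ℓ * (Real.log B - Real.log A)) := by rw [e2]; ring
        _ = -(1-μ)*(B-A) := by rw [e1]
        _ = (1-μ)*(A-B) := by ring
    have e7 : ℓ * Real.log d = ℓ*Real.log B - ℓ*Real.log ℓ := by rw [e5]; ring
    rw [hℓeq, hspec]
    nlinarith [e3, e6, e7, hdl]

theorem reverse_diff_refined_young (a b : ℝ) (ha : 0 < a) (hb : 0 < b)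
    (ν : ℝ) (hν : ν ∈ Set.Icc (0:ℝ) 1) (r : ℝ) (hr : r = min ν (1 - ν))
    (ω : ℝ) (hω : ω = max (Real.sqrt a) (Real.sqrt b)) :
    (1 - ν) * a + ν * b - a ^ (1 - ν) * b ^ ν - r * (Real.sqrt a - Real.sqrt b) ^ 2 ≤
      ω * logMean (Real.sqrt a) (Real.sqrt b) * Real.log (specht (Real.sqrt (a / b))) := by
  obtain ⟨hν0, hν1⟩ := hν
  set x := Real.sqrt a with hxdef
  set y := Real.sqrt b with hydef
  have hx : 0 < x := Real.sqrt_pos.mpr ha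
  have hy : 0 < y := Real.sqrt_pos.mpr hb
  have hxa : x^2 = a := Real.sq_sqrt ha.le
  have hyb : y^2 = b := Real.sq_sqrt hb.le
  have hsq : Real.sqrt (a/b) = x/y := Real.sqrt_div ha.le b
  have hla : Real.log a = 2*Real.log x := by
    rw [← hxa, Real.log_pow]; push_cast; ring
  have hlb : Real.log b = 2*Real.log y := by
    rw [← hyb, Real.log_pow]; push_cast; ring
  have hlxy : Real.log (x*y) = Real.log x + Real.log y := Real.log_mul hx.ne' hy.ne'
  have hB : 0 < x*y := mul_pos hx hy
  rw [hsq]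
  by_cases hxy : x = y
  · have hab : a = b := by rw [← hxa, ← hyb, hxy]
    have hpow : a^(1-ν)*b^ν = a := by
      rw [← hab, ← Real.rpow_add ha]; norm_num
    rw [hpow, hxy, div_self hy.ne', show specht 1 = 1 from if_pos rfl, Real.log_one, mul_zero]
    have : (1-ν)*a + ν*b - a - r*(y-y)^2 = 0 := by rw [← hab]; ring
    linarith
  · have hS : 0 ≤ Real.log (specht (x/y)) := log_specht_nonneg (div_pos hx hy)
    have hM : 0 ≤ logMean x y := (logMean_pos hx hy).le
    rcases le_total ν (1-ν) with hc | hc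
    · -- r = ν, use μ = 2ν with A = a, B = x*y
      have hrν : r = ν := by rw [hr, min_eq_left hc]
      subst hrν
      have hcore := core_lemma a (x*y) ha hB (2*r) (by linarith) (by linarith)
      have harith : (1-r)*a + r*b - r*(x-y)^2 = (1-2*r)*a + (2*r)*(x*y) := by
        rw [← hxa, ← hyb]; ring
      have hgeom : a^(1-r)*b^r = a^(1-2*r)*(x*y)^(2*r) := by
        rw [Real.rpow_def_of_pos ha, Real.rpow_def_of_pos hb, Real.rpow_def_of_pos ha,
          Real.rpow_def_of_pos hB, ← Real.exp_add, ← Real.exp_add, hla, hlb, hlxy]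
        congr 1; ring
      have hdiv : a/(x*y) = x/y := by
        rw [← hxa, sq, mul_div_mul_left x y hx.ne']
      have hLM : logMean a (x*y) = x * logMean x y := by
        rw [← hxa, sq]; exact logMean_smul x x y hx hx hy
      rw [hdiv, hLM] at hcore
      have hxω : x ≤ ω := hω ▸ le_max_left _ _
      calc (1-r)*a + r*b - a^(1-r)*b^r - r*(x-y)^2
          = (1-2*r)*a + (2*r)*(x*y) - a^(1-2*r)*(x*y)^(2*r) := by
            rw [hgeom]; linarith [harith]
        _ ≤ x * logMean x y * Real.log (specht (x/y)) := hcore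
        _ ≤ ω * logMean x y * Real.log (specht (x/y)) := by
            exact mul_le_mul_of_nonneg_right (mul_le_mul_of_nonneg_right hxω hM) hS
    · -- r = 1-ν, use μ = 2(1-ν) with A = b, B = x*y
      have hrν : r = 1-ν := by rw [hr, min_eq_right hc]
      have hcore := core_lemma b (x*y) hb hB (2*(1-ν)) (by linarith) (by linarith)
      have harith : (1-ν)*a + ν*b - (1-ν)*(x-y)^2
          = (1-2*(1-ν))*b + (2*(1-ν))*(x*y) := by
        rw [← hxa, ← hyb]; ring
      have hgeom : a^(1-ν)*b^ν = b^(1-2*(1-ν))*(x*y)^(2*(1-ν)) := by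
        rw [Real.rpow_def_of_pos ha, Real.rpow_def_of_pos hb, Real.rpow_def_of_pos hb,
          Real.rpow_def_of_pos hB, ← Real.exp_add, ← Real.exp_add, hla, hlb, hlxy]
        congr 1; ring
      have hdiv : b/(x*y) = y/x := by
        rw [← hyb, sq, mul_comm x y, mul_div_mul_left y x hy.ne']
      have hLM : logMean b (x*y) = y * logMean x y := by
        rw [← hyb, sq, mul_comm x y, logMean_smul y y x hy hy hx, logMean_symm y x]
      have hspec : Real.log (specht (y/x)) = Real.log (specht (x/y)) := by
        have h1 : (x/y)⁻¹ = y/x := inv_div x y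
        have h2 : x/y ≠ 1 := by rw [Ne, div_eq_one_iff_eq hy.ne']; exact hxy
        rw [← h1, log_specht_inv (div_pos hx hy) h2]
      rw [hdiv, hLM, hspec] at hcore
      have hyω : y ≤ ω := hω ▸ le_max_right _ _
      calc (1-ν)*a + ν*b - a^(1-ν)*b^ν - r*(x-y)^2
          = (1-2*(1-ν))*b + (2*(1-ν))*(x*y) - b^(1-2*(1-ν))*(x*y)^(2*(1-ν)) := by
            rw [hgeom, hrν]; linarith [harith]
        _ ≤ y * logMean x y * Real.log (specht (x/y)) := hcore
        _ ≤ ω * logMean x y * Real.log (specht (x/y)) := by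
            exact mul_le_mul_of_nonneg_right (mul_le_mul_of_nonneg_right hyω hM) hS
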